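/- Let V : ℝ → ℝ be even, non-negative, non-increasing on (0,∞), integrable with finite first moment; set a := ∫₀^∞ V, ρ̃*(x) := max(1/√a − x/(2aγ), 0), g(x) := (1/√a) ∫_x^∞ V(y) dy, and h_γ(x) := (1/(2aγ)) ∫₀^∞ [V(y + 2γ√a − x) − V(y + x)] y dy. For a non-negative measure μ̃ on [0,∞) define Ẽ_γ(μ̃) := (1/2)∫₀^∞∫₀^∞ V(x−y) dμ̃(x) dμ̃(y) + (1/γ)∫₀^∞ x dμ̃(x). Then for every finite signed Borel measure ν on [0,∞) with ν([0,∞)) = 0, |ν|([0,∞)) ≤ 2γ, and ν + ρ̃* dx ≥ 0, one has Ẽ_γ(ρ̃* dx + ν) − Ẽ_γ(ρ̃* dx) = (1/2)∫₀^∞∫₀^∞ V(x−y) dν(x) dν(y) − ∫₀^∞ g dν + ∫₀^∞ h_γ dν. -/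

import Mathlib

open MeasureTheory Set Filter
open scoped ENNReal Topology

noncomputable section

/-- The rescaled bulk profile `ρ̃*(x) = (1/√a − x/(2aγ))⁺`. -/
def rhoTilde (a γ x : ℝ) : ℝ := max (1 / Real.sqrt a - x / (2 * a * γ)) 0

/-- The measure `ρ̃* dx` on `[0,∞)`. -/
def lamMeas (a γ : ℝ) : Measure ℝ :=
  (volume.restrict (Ici (0 : ℝ))).withDensity fun x => ENNReal.ofReal (rhoTilde a γ x)

/-- `g(x) = (1/√a) ∫_x^∞ V(y) dy`. -/
def gFun (V : ℝ → ℝ) (a x : ℝ) : ℝ := (1 / Real.sqrt a) * ∫ y in Ioi x, V y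

/-- The auxiliary boundary function `h_γ`. -/
def hGam (V : ℝ → ℝ) (a γ x : ℝ) : ℝ :=
  (1 / (2 * a * γ)) *
    ∫ y in Ioi (0 : ℝ), (V (y + 2 * γ * Real.sqrt a - x) - V (y + x)) * y

/-- The blown-up continuum energy
`Ẽ_γ(μt) = (1/2) ∬ V(x−y) dμt dμt + (1/γ) ∫ x dμt`. -/
def Etilde (V : ℝ → ℝ) (γ : ℝ) (μ : Measure ℝ) : ℝ :=
  (1 / 2) * (∫ x, (∫ y, V (x - y) ∂μ) ∂μ) + (1 / γ) * ∫ x, x ∂μ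

namespace Stmt6Aux

/-! ### Generic integral manipulation lemmas -/

lemma split_univ {f : ℝ → ℝ} (hf : Integrable f) (t : ℝ) :
    ∫ x, f x = (∫ x in Iic t, f x) + ∫ x in Ioi t, f x := by
  rw [← setIntegral_union (Iic_disjoint_Ioi le_rfl) measurableSet_Ioi hf.integrableOn
    hf.integrableOn, Set.Iic_union_Ioi, setIntegral_univ]

lemma interval_S {f : ℝ → ℝ} (hf : Integrable f) {p q : ℝ} (hpq : p ≤ q) :
    ∫ u in p..q, f u = (∫ u in Ioi p, f u) - ∫ u in Ioi q, f u := by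
  have h := setIntegral_union (μ := volume) (f := f) (s := Ioc p q)
    (Ioc_disjoint_Ioi (le_refl q)) measurableSet_Ioi hf.integrableOn hf.integrableOn
  rw [Ioc_union_Ioi_eq_Ioi hpq] at h
  rw [intervalIntegral.integral_of_le hpq]
  linarith

lemma shift_preimage (d : ℝ) : (fun x : ℝ => x + d) ⁻¹' (Ioi d) = Ioi 0 := by
  ext x; simp [lt_add_iff_pos_left]

lemma embed_add (d : ℝ) : MeasurableEmbedding (fun x : ℝ => x + d) :=
  (Homeomorph.addRight d).isClosedEmbedding.measurableEmbedding

lemma integral_shift (g : ℝ → ℝ) (d : ℝ) :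
    (∫ y in Ioi (0:ℝ), g (y + d)) = ∫ u in Ioi d, g u := by
  have A := embed_add d
  have h1 : (∫ u in Ioi d, g u) = ∫ u in Ioi d, g u ∂(Measure.map (fun x : ℝ => x + d) volume) := by
    rw [map_add_right_eq_self]
  rw [h1, A.setIntegral_map g (Ioi d), shift_preimage]

lemma integrableOn_shift {g : ℝ → ℝ} {d : ℝ} (hg : IntegrableOn g (Ioi d)) :
    IntegrableOn (fun y => g (y + d)) (Ioi (0:ℝ)) := by
  have A := embed_add d
  have h1 : (volume : Measure ℝ).restrict (Ioi d)
      = Measure.map (fun x : ℝ => x + d) (volume.restrict (Ioi 0)) := by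
    rw [← shift_preimage d, ← Measure.restrict_map A.measurable measurableSet_Ioi,
      map_add_right_eq_self]
  rw [IntegrableOn, h1] at hg
  exact A.integrable_map_iff.mp hg

/-! ### Lemmas about `V` -/

variable {V : ℝ → ℝ}

lemma intxV (hVnonneg : ∀ x, 0 ≤ V x) (hVint : Integrable V)
    (hVmom : Integrable (fun x => |x| * V x)) : Integrable (fun x => x * V x) := by
  refine hVmom.mono' (aestronglyMeasurable_id.mul hVint.aestronglyMeasurable) ?_
  refine ae_of_all _ fun x => ?_
  rw [Real.norm_eq_abs, abs_mul, abs_of_nonneg (hVnonneg x)]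

lemma iicS (hVeven : ∀ x, V (-x) = V x) (t : ℝ) :
    ∫ u in Iic (-t), V u = ∫ u in Ioi t, V u := by
  have h := integral_comp_neg_Iic (-t) V
  rw [neg_neg] at h
  rw [← h]
  exact setIntegral_congr_fun measurableSet_Iic fun x _ => (hVeven x).symm

lemma totalV (hVeven : ∀ x, V (-x) = V x) (hVint : Integrable V) {a : ℝ}
    (ha : a = ∫ x in Ioi (0 : ℝ), V x) : ∫ x, V x = 2 * a := by
  have h := split_univ hVint 0
  have h2 := iicS hVeven 0
  rw [neg_zero] at h2
  rw [h, h2, ← ha]; ring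

lemma reflS (hVeven : ∀ x, V (-x) = V x) (hVint : Integrable V) {a : ℝ}
    (ha : a = ∫ x in Ioi (0 : ℝ), V x) (t : ℝ) :
    ∫ u in Ioi (-t), V u = 2 * a - ∫ u in Ioi t, V u := by
  have h := split_univ hVint (-t)
  rw [totalV hVeven hVint ha, iicS hVeven t] at h
  linarith

lemma iicT (hVeven : ∀ x, V (-x) = V x) (t : ℝ) :
    ∫ u in Iic (-t), u * V u = -∫ u in Ioi t, u * V u := by
  have h := integral_comp_neg_Iic (-t) (fun u => u * V u)
  rw [neg_neg] at h
  have h2 : ∫ x in Iic (-t), -x * V (-x) = ∫ x in Iic (-t), -(x * V x) := by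
    refine setIntegral_congr_fun measurableSet_Iic fun x _ => ?_
    rw [hVeven x]; ring
  rw [h2, integral_neg] at h
  linarith

lemma reflT (hVeven : ∀ x, V (-x) = V x) (hVnonneg : ∀ x, 0 ≤ V x) (hVint : Integrable V)
    (hVmom : Integrable (fun x => |x| * V x)) (t : ℝ) :
    ∫ u in Ioi (-t), u * V u = ∫ u in Ioi t, u * V u := by
  have hxv := intxV hVnonneg hVint hVmom
  have htot : ∫ x, x * V x = 0 := by
    have h := split_univ hxv 0
    have h2 := iicT hVeven 0
    rw [neg_zero] at h2
    rw [h, h2]; ring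
  have h := split_univ hxv (-t)
  rw [htot, iicT hVeven t] at h
  linarith

lemma integrableOn_moment (hVnonneg : ∀ x, 0 ≤ V x) (hVint : Integrable V)
    (hVmom : Integrable (fun x => |x| * V x)) (d : ℝ) :
    IntegrableOn (fun y => V (y + d) * y) (Ioi (0:ℝ)) := by
  have hg : IntegrableOn (fun u => V u * (u - d)) (Ioi d) := by
    have h2 : IntegrableOn (fun u => u * V u - d * V u) (Ioi d) :=
      ((intxV hVnonneg hVint hVmom).integrableOn).sub ((hVint.integrableOn).const_mul d)
    exact h2.congr_fun (fun u _ => by ring) measurableSet_Ioi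
  exact (integrableOn_shift hg).congr_fun
    (fun y _ => by simp [add_sub_cancel_right]) measurableSet_Ioi

lemma moment_fun_eq (d : ℝ) :
    (fun y => V (y + d) * y) = fun y => (fun u => V u * (u - d)) (y + d) := by
  funext y; simp [add_sub_cancel_right]

lemma shift_moment (hVnonneg : ∀ x, 0 ≤ V x) (hVint : Integrable V)
    (hVmom : Integrable (fun x => |x| * V x)) (d : ℝ) :
    (∫ y in Ioi (0:ℝ), V (y + d) * y)
      = (∫ u in Ioi d, u * V u) - d * ∫ u in Ioi d, V u := by
  rw [moment_fun_eq d, integral_shift (fun u => V u * (u - d)) d]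
  have h : (∫ u in Ioi d, V u * (u - d)) = ∫ u in Ioi d, (u * V u - d * V u) := by
    refine setIntegral_congr_fun measurableSet_Ioi fun u _ => by ring
  rw [h, integral_sub ((intxV hVnonneg hVint hVmom).integrableOn)
    ((hVint.integrableOn).const_mul d), integral_const_mul]

/-! ### `gFun` is bounded measurable, hence integrable against finite measures -/

lemma gFun_meas (hVnonneg : ∀ x, 0 ≤ V x) (hVint : Integrable V) (a : ℝ) :
    Measurable (gFun V a) := by
  have h : Antitone (fun x => ∫ y in Ioi x, V y) := by
    intro p q hpq
    refine setIntegral_mono_set hVint.integrableOn (ae_of_all _ fun x => hVnonneg x) ?_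
    exact HasSubset.Subset.eventuallyLE (Ioi_subset_Ioi hpq)
  exact (h.measurable).const_mul _

lemma gFun_integrable (hVnonneg : ∀ x, 0 ≤ V x) (hVint : Integrable V) (a : ℝ)
    (μ : Measure ℝ) [IsFiniteMeasure μ] : Integrable (gFun V a) μ := by
  refine Integrable.mono'
    (integrable_const ((1 / Real.sqrt a) * ∫ y, V y) : Integrable (fun _ : ℝ => _) μ)
    (gFun_meas hVnonneg hVint a).aestronglyMeasurable (ae_of_all _ fun x => ?_)
  have h0 : 0 ≤ (1:ℝ) / Real.sqrt a := by positivity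
  have h1 : 0 ≤ ∫ y in Ioi x, V y := setIntegral_nonneg measurableSet_Ioi fun y _ => hVnonneg y
  have h2 : (∫ y in Ioi x, V y) ≤ ∫ y, V y := by
    rw [split_univ hVint x]
    have h3 : 0 ≤ ∫ y in Iic x, V y := setIntegral_nonneg measurableSet_Iic fun y _ => hVnonneg y
    linarith
  rw [Real.norm_eq_abs, gFun, abs_mul, abs_of_nonneg h0, abs_of_nonneg h1]
  exact mul_le_mul_of_nonneg_left h2 h0

/-! ### Evaluation of integrals against `lamMeas` -/

lemma rho_meas (a γ : ℝ) : Measurable (fun x => (rhoTilde a γ x).toNNReal) := by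
  have h : Continuous (rhoTilde a γ) := by
    unfold rhoTilde
    exact ((continuous_const.sub (continuous_id.div_const _)).max continuous_const)
  exact h.measurable.real_toNNReal

lemma lam_eval {a γ : ℝ} (ha : 0 < a) (hγ : 0 < γ) (f : ℝ → ℝ) :
    ∫ y, f y ∂(lamMeas a γ)
      = ∫ y in (0:ℝ)..(2 * γ * Real.sqrt a),
          (1 / Real.sqrt a - y / (2 * a * γ)) * f y := by
  have hsa : 0 < Real.sqrt a := Real.sqrt_pos.mpr ha
  have hsa2 : Real.sqrt a * Real.sqrt a = a := Real.mul_self_sqrt ha.le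
  set L := 2 * γ * Real.sqrt a with hL
  have hL0 : (0:ℝ) ≤ L := by positivity
  have hLc : L / (2 * a * γ) = 1 / Real.sqrt a := by
    rw [div_eq_div_iff (by positivity) hsa.ne']
    nlinarith
  have hlam : lamMeas a γ
      = (volume.restrict (Ici (0:ℝ))).withDensity
          fun x => ((fun x => (rhoTilde a γ x).toNNReal) x : ℝ≥0∞) := rfl
  rw [hlam, integral_withDensity_eq_integral_smul (rho_meas a γ) f]
  have step1 : ∫ y in Ici (0:ℝ), (rhoTilde a γ y).toNNReal • f y
      = ∫ y in Icc (0:ℝ) L, (rhoTilde a γ y).toNNReal • f y := by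
    refine setIntegral_eq_of_subset_of_forall_diff_eq_zero measurableSet_Ici
      (fun y hy => hy.1) (fun y hy => ?_)
    have hyL : L < y := by
      rcases hy with ⟨hy0, hy1⟩
      by_contra h
      exact hy1 ⟨hy0, not_lt.mp h⟩
    have hrho : rhoTilde a γ y = 0 := by
      apply max_eq_right
      have h2 : 1 / Real.sqrt a < y / (2 * a * γ) := by
        rw [← hLc]
        exact (div_lt_div_iff_of_pos_right (by positivity)).mpr hyL
      linarith
    simp [hrho]
  rw [step1]
  have step2 : ∫ y in Icc (0:ℝ) L, (rhoTilde a γ y).toNNReal • f y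
      = ∫ y in Icc (0:ℝ) L, (1 / Real.sqrt a - y / (2 * a * γ)) * f y := by
    refine setIntegral_congr_fun measurableSet_Icc (fun y hy => ?_)
    have hnn : 0 ≤ 1 / Real.sqrt a - y / (2 * a * γ) := by
      have h2 : y / (2 * a * γ) ≤ 1 / Real.sqrt a := by
        rw [← hLc]
        exact (div_le_div_iff_of_pos_right (by positivity)).mpr hy.2
      linarith
    have hrho : rhoTilde a γ y = 1 / Real.sqrt a - y / (2 * a * γ) := max_eq_left hnn
    rw [NNReal.smul_def, hrho, Real.coe_toNNReal _ hnn, smul_eq_mul]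
  rw [step2, integral_Icc_eq_integral_Ioc, ← intervalIntegral.integral_of_le hL0]

/-! ### The Euler–Lagrange identity -/

lemma key (hVeven : ∀ x, V (-x) = V x) (hVnonneg : ∀ x, 0 ≤ V x)
    (hVint : Integrable V) (hVmom : Integrable (fun x => |x| * V x)) {a γ : ℝ}
    (haV : a = ∫ x in Ioi (0 : ℝ), V x) (ha : 0 < a) (hγ : 0 < γ) (x : ℝ) :
    (∫ y, V (x - y) ∂(lamMeas a γ)) + x / γ + gFun V a x - hGam V a γ x
      = 2 * Real.sqrt a := by
  have hxv := intxV hVnonneg hVint hVmom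
  have hsa : 0 < Real.sqrt a := Real.sqrt_pos.mpr ha
  have hsa2 : Real.sqrt a * Real.sqrt a = a := Real.mul_self_sqrt ha.le
  set sa := Real.sqrt a with hsadef
  set L := 2 * γ * sa with hL
  have hL0 : (0:ℝ) ≤ L := by positivity
  set S : ℝ → ℝ := fun t => ∫ u in Ioi t, V u with hS
  set T : ℝ → ℝ := fun t => ∫ u in Ioi t, u * V u with hT
  have iV : Integrable (fun y => V (x - y)) := hVint.comp_sub_left x
  have iyV : Integrable (fun y => y * V (x - y)) := by
    have h1 : Integrable (fun u => x * V u - u * V u) := (hVint.const_mul x).sub hxv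
    have h2 := h1.comp_sub_left x
    refine h2.congr (ae_of_all _ fun y => ?_)
    simp only []
    ring_nf
  have hphi : (∫ y, V (x - y) ∂(lamMeas a γ))
      = (1 / sa) * (S (x - L) - S x)
        - (1 / (2 * a * γ)) * (x * (S (x - L) - S x) - (T (x - L) - T x)) := by
    rw [lam_eval ha hγ (fun y => V (x - y))]
    have hsplit : ∫ y in (0:ℝ)..L, (1 / sa - y / (2 * a * γ)) * V (x - y)
        = (1 / sa) * (∫ y in (0:ℝ)..L, V (x - y))
          - (1 / (2 * a * γ)) * ∫ y in (0:ℝ)..L, y * V (x - y) := by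
      rw [← intervalIntegral.integral_const_mul, ← intervalIntegral.integral_const_mul,
        ← intervalIntegral.integral_sub ((iV.intervalIntegrable).const_mul _)
          ((iyV.intervalIntegrable).const_mul _)]
      refine intervalIntegral.integral_congr fun y _ => ?_
      ring
    have hJ1 : (∫ y in (0:ℝ)..L, V (x - y)) = S (x - L) - S x := by
      rw [intervalIntegral.integral_comp_sub_left V x, sub_zero]
      exact interval_S hVint (by linarith)
    have hJ2 : (∫ y in (0:ℝ)..L, y * V (x - y)) = x * (S (x - L) - S x) - (T (x - L) - T x) := by
      have hfun : ∀ y ∈ uIcc (0:ℝ) L, y * V (x - y) = (fun u => x * V u - u * V u) (x - y) := by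
        intro y _; simp only []; ring
      rw [intervalIntegral.integral_congr hfun,
        intervalIntegral.integral_comp_sub_left (fun u => x * V u - u * V u) x, sub_zero,
        intervalIntegral.integral_sub ((hVint.intervalIntegrable).const_mul x)
          (hxv.intervalIntegrable), intervalIntegral.integral_const_mul,
        interval_S hVint (by linarith : x - L ≤ x), interval_S hxv (by linarith : x - L ≤ x)]
      try ring
    rw [hsplit, hJ1, hJ2]
  have hh : hGam V a γ x
      = (1 / (2 * a * γ)) * ((T (L - x) - (L - x) * S (L - x)) - (T x - x * S x)) := by
    unfold hGam
    have harg : ∀ y : ℝ, y + 2 * γ * Real.sqrt a - x = y + (L - x) := by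
      intro y; rw [hL, hsadef]; ring
    have hsplit : (∫ y in Ioi (0:ℝ), (V (y + 2 * γ * Real.sqrt a - x) - V (y + x)) * y)
        = (∫ y in Ioi (0:ℝ), V (y + (L - x)) * y) - ∫ y in Ioi (0:ℝ), V (y + x) * y := by
      rw [← integral_sub (integrableOn_moment hVnonneg hVint hVmom (L - x))
        (integrableOn_moment hVnonneg hVint hVmom x)]
      refine setIntegral_congr_fun measurableSet_Ioi fun y _ => ?_
      rw [harg y]; try ring
    rw [hsplit, shift_moment hVnonneg hVint hVmom (L - x), shift_moment hVnonneg hVint hVmom x]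
    try rw [← hS, ← hT]
    try ring
  have hgg : gFun V a x = (1 / sa) * S x := rfl
  have hrS : S (x - L) = 2 * a - S (L - x) := by
    have h := reflS hVeven hVint haV (L - x)
    rw [neg_sub] at h
    exact h
  have hrT : T (x - L) = T (L - x) := by
    have h := reflT hVeven hVnonneg hVint hVmom (L - x)
    rw [neg_sub] at h
    exact h
  rw [hphi, hh, hgg, hrS, hrT]
  have haa : a = sa * sa := hsa2.symm
  rw [haa]
  field_simp
  ring

/-! ### Combining integrals -/

lemma combine {μ : Measure ℝ} [IsFiniteMeasure μ] {φ g h : ℝ → ℝ} {γ sa : ℝ}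
    (h1 : Integrable φ μ) (h2 : Integrable (fun x : ℝ => x) μ) (h3 : Integrable g μ)
    (h4 : Integrable h μ) (hkey : ∀ x, φ x + x / γ + g x - h x = 2 * sa) :
    (∫ x, φ x ∂μ) + (1 / γ) * (∫ x, x ∂μ) + (∫ x, g x ∂μ) - (∫ x, h x ∂μ)
      = 2 * sa * (μ univ).toReal := by
  have h2' : Integrable (fun x : ℝ => x / γ) μ := h2.div_const γ
  have hca : ∫ x, (φ x + x / γ + g x - h x) ∂μ = 2 * sa * (μ univ).toReal := by
    have he : (fun x => φ x + x / γ + g x - h x) = fun _ => 2 * sa := funext hkey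
    rw [he, integral_const, smul_eq_mul, measureReal_def]; ring
  have e3 := integral_sub (μ := μ) ((h1.add h2').add h3) h4
  have e1 := integral_add (μ := μ) (h1.add h2') h3
  have e2 := integral_add (μ := μ) h1 h2'
  simp only [Pi.add_apply] at e3 e1 e2
  rw [e3, e1, e2, integral_div] at hca
  have hd : (∫ x, x ∂μ) / γ = (1 / γ) * ∫ x, x ∂μ := by ring
  linarith [hca]


/-! ### Support properties of `lamMeas` -/

lemma lam_Iio {a γ : ℝ} : lamMeas a γ (Iio 0) = 0 := by
  rw [lamMeas, withDensity_apply _ measurableSet_Iio,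
    Measure.restrict_restrict measurableSet_Iio, Iio_inter_Ici, Ico_self,
    Measure.restrict_empty, lintegral_zero_measure]

lemma lam_Ioi {a γ : ℝ} (ha : 0 < a) (hγ : 0 < γ) :
    lamMeas a γ (Ioi (2 * γ * Real.sqrt a)) = 0 := by
  have hsa : 0 < Real.sqrt a := Real.sqrt_pos.mpr ha
  have hsa2 : Real.sqrt a * Real.sqrt a = a := Real.mul_self_sqrt ha.le
  have hLc : (2 * γ * Real.sqrt a) / (2 * a * γ) = 1 / Real.sqrt a := by
    rw [div_eq_div_iff (by positivity) hsa.ne']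
    nlinarith
  rw [lamMeas, withDensity_apply _ measurableSet_Ioi]
  rw [setLIntegral_congr_fun measurableSet_Ioi
    (fun y (hy : 2 * γ * Real.sqrt a < y) => ?_), lintegral_zero]
  have hrho : rhoTilde a γ y = 0 := by
    apply max_eq_right
    have h2 : 1 / Real.sqrt a < y / (2 * a * γ) := by
      rw [← hLc]
      exact (div_lt_div_iff_of_pos_right (by positivity)).mpr hy
    linarith
  simp [hrho]

lemma lam_ae_Icc {a γ : ℝ} (ha : 0 < a) (hγ : 0 < γ) :
    ∀ᵐ x ∂(lamMeas a γ), x ∈ Icc 0 (2 * γ * Real.sqrt a) := by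
  rw [ae_iff]
  refine measure_mono_null (fun x hx => ?_)
    (measure_union_null (lam_Iio (a := a) (γ := γ)) (lam_Ioi ha hγ))
  simp only [mem_setOf_eq, mem_Icc, not_and, not_le] at hx
  rcases lt_or_ge x 0 with h | h
  · exact Or.inl h
  · exact Or.inr (hx h)

lemma lam_integrable_id {a γ : ℝ} (ha : 0 < a) (hγ : 0 < γ)
    [IsFiniteMeasure (lamMeas a γ)] : Integrable (fun x : ℝ => x) (lamMeas a γ) := by
  refine Integrable.mono' (integrable_const (2 * γ * Real.sqrt a)) aestronglyMeasurable_id ?_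
  filter_upwards [lam_ae_Icc ha hγ] with x hx
  rw [Real.norm_eq_abs, abs_of_nonneg hx.1]
  exact hx.2

end Stmt6Aux

open Stmt6Aux

/-- identity for the blown-up energy difference.  The signed measure
`ν` is represented through the non-negative finite measure `μt = ρ̃* dx + ν`; the
conditions `ν([0,∞)) = 0`, `|ν|([0,∞)) ≤ 2γ` and `ν + ρ̃* dx ≥ 0` translate into
the hypotheses below, and all integrals against `ν` are expanded by linearity. -/
theorem stmt6 (V : ℝ → ℝ) (hVeven : ∀ x, V (-x) = V x) (hVnonneg : ∀ x, 0 ≤ V x)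
    (hVmono : AntitoneOn V (Ioi (0 : ℝ))) (hVint : Integrable V)
    (hVmom : Integrable (fun x => |x| * V x)) (a : ℝ)
    (ha : a = ∫ x in Ioi (0 : ℝ), V x) :
    ∀ γ : ℝ, 0 < γ →
    ∀ (μt : Measure ℝ) [IsFiniteMeasure μt],
      -- ν := μt − ρ̃* dx is supported in [0,∞)
      μt (Iio (0 : ℝ)) = 0 →
      -- ν([0,∞)) = 0
      μt Set.univ = lamMeas a γ Set.univ →
      -- |ν|([0,∞)) ≤ 2γ  (equivalently, ν(s) ≤ γ for every Borel s, since ν(univ) = 0)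
      (∀ s : Set ℝ, MeasurableSet s → μt s ≤ lamMeas a γ s + ENNReal.ofReal γ) →
      -- integrability side conditions, implicit in the statement of the identity
      Integrable (fun p : ℝ × ℝ => V (p.1 - p.2)) (μt.prod μt) →
      Integrable (fun p : ℝ × ℝ => V (p.1 - p.2)) (μt.prod (lamMeas a γ)) →
      Integrable (fun p : ℝ × ℝ => V (p.1 - p.2)) ((lamMeas a γ).prod (lamMeas a γ)) →
      Integrable (fun x : ℝ => x) μt →
      Integrable (hGam V a γ) μt →
      -- the identity: Ẽ_γ(ρ̃* dx + ν) − Ẽ_γ(ρ̃* dx)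
      --   = (1/2) ∬ V(x−y) dν dν − ∫ g dν + ∫ h_γ dν
      Etilde V γ μt - Etilde V γ (lamMeas a γ) =
        (1 / 2) * ((∫ x, (∫ y, V (x - y) ∂μt) ∂μt)
            - 2 * (∫ x, (∫ y, V (x - y) ∂(lamMeas a γ)) ∂μt)
            + ∫ x, (∫ y, V (x - y) ∂(lamMeas a γ)) ∂(lamMeas a γ))
          - ((∫ x, gFun V a x ∂μt) - ∫ x, gFun V a x ∂(lamMeas a γ))
          + ((∫ x, hGam V a γ x ∂μt) - ∫ x, hGam V a γ x ∂(lamMeas a γ)) := by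
  intro γ hγ μt _ hsupp hmass hbound hAA hAB hBB hxint hhint
  have ha0 : 0 ≤ a := by
    rw [ha]
    exact setIntegral_nonneg measurableSet_Ioi fun y _ => hVnonneg y
  rcases eq_or_lt_of_le ha0 with heq | hpos
  · -- degenerate case `a = 0`
    have hρ : (fun x => ENNReal.ofReal (rhoTilde a γ x)) = fun _ => (0 : ℝ≥0∞) := by
      funext x
      rw [← heq]
      simp [rhoTilde, Real.sqrt_zero]
    have hlam0 : lamMeas a γ = 0 := by
      rw [lamMeas, hρ]
      exact withDensity_zero
    have hμt0 : μt = 0 := by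
      apply Measure.measure_univ_eq_zero.mp
      rw [hmass, hlam0]
      simp
    rw [hμt0, hlam0]
    simp [Etilde]
  · -- main case `0 < a`
    haveI hfin : IsFiniteMeasure (lamMeas a γ) :=
      ⟨by rw [← hmass]; exact measure_lt_top μt _⟩
    have hkey := key hVeven hVnonneg hVint hVmom ha hpos hγ
    have hφμ : Integrable (fun x => ∫ y, V (x - y) ∂(lamMeas a γ)) μt :=
      hAB.integral_prod_left
    have hphiL : Integrable (fun x => ∫ y, V (x - y) ∂(lamMeas a γ)) (lamMeas a γ) :=
      hBB.integral_prod_left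
    have hgμ := gFun_integrable hVnonneg hVint a μt
    have hgL := gFun_integrable hVnonneg hVint a (lamMeas a γ)
    have hxL : Integrable (fun x : ℝ => x) (lamMeas a γ) := lam_integrable_id hpos hγ
    have hhL : Integrable (hGam V a γ) (lamMeas a γ) := by
      have h := ((hphiL.add (hxL.div_const γ)).add hgL).sub
        (integrable_const (2 * Real.sqrt a) : Integrable (fun _ : ℝ => _) (lamMeas a γ))
      refine h.congr (ae_of_all _ fun x => ?_)
      have hk := hkey x
      simp only [Pi.add_apply, Pi.sub_apply]
      linarith
    have E1 : (∫ x, (∫ y, V (x - y) ∂(lamMeas a γ)) ∂μt) + (1 / γ) * (∫ x, x ∂μt)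
        + (∫ x, gFun V a x ∂μt) - (∫ x, hGam V a γ x ∂μt)
        = 2 * Real.sqrt a * ((lamMeas a γ) univ).toReal := by
      have h := combine hφμ hxint hgμ hhint hkey
      rwa [hmass] at h
    have E2 : (∫ x, (∫ y, V (x - y) ∂(lamMeas a γ)) ∂(lamMeas a γ))
        + (1 / γ) * (∫ x, x ∂(lamMeas a γ))
        + (∫ x, gFun V a x ∂(lamMeas a γ)) - (∫ x, hGam V a γ x ∂(lamMeas a γ))
        = 2 * Real.sqrt a * ((lamMeas a γ) univ).toReal :=
      combine hphiL hxL hgL hhL hkey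
    simp only [Etilde]
    linarith [E1, E2]

end
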